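/- arXiv:2205.13321 — 3 statements merged into one kernel-verified Lean document; each statement's English description precedes it below -/
import Mathlib

section
/- For integers N ≥ 1, n with 0 ≤ n ≤ N-1, and m = lN + j with l ≥ 1 odd and 0 ≤ j ≤ N-1, the sum S = (1/2)·1 + Σ_{k=1}^{N-1} cos(kπ(2m+1)/(2N))·cos(kπ(2n+1)/(2N)) equals N/2 if j = N-1-n and equals 0 otherwise. -/
open Real

private lemma re_aux' (φ : ℝ) (hz : Complex.exp (φ * Complex.I) ≠ 1) :
    ((-2 : ℂ) / (Complex.exp (φ * Complex.I) - 1)).re = 1 := by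
  set z := Complex.exp ((φ:ℂ) * Complex.I) with hzdef
  have hre : z.re = Real.cos φ := Complex.exp_ofReal_mul_I_re φ
  have him : z.im = Real.sin φ := Complex.exp_ofReal_mul_I_im φ
  have hsq : Complex.normSq (z - 1) = 2 - 2 * Real.cos φ := by
    simp [Complex.normSq_apply, Complex.sub_re, Complex.sub_im, hre, him]
    nlinarith [Real.sin_sq_add_cos_sq φ]
  have hne : Complex.normSq (z - 1) ≠ 0 := by
    intro h
    exact hz (sub_eq_zero.mp (Complex.normSq_eq_zero.mp h))
  rw [Complex.div_re, hsq]
  rw [hsq] at hne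
  simp only [Complex.sub_re, Complex.sub_im, hre, him, Complex.neg_re, Complex.neg_im,
    Complex.re_ofNat, Complex.im_ofNat]
  field_simp
  have h1 : (1 - Real.cos φ) ≠ 0 := fun h => hne (by linarith)
  rw [Complex.one_re]
  have h2 : (1 - Real.cos φ)⁻¹ * (1 - Real.cos φ) = 1 := inv_mul_cancel₀ h1
  linear_combination 2 * h2

private lemma cos_sum_eq' (N a : ℕ) (hN : 1 ≤ N) :
    ∑ k ∈ Finset.range N, Real.cos (k * (π * a / N))
    = if 2 * N ∣ a then (N : ℝ) else if Even a then 0 else 1 := by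
  have hN0 : (N : ℝ) ≠ 0 := by positivity
  by_cases hdvd : 2 * N ∣ a
  · rw [if_pos hdvd]
    obtain ⟨t, ht⟩ := hdvd
    have : ∀ k ∈ Finset.range N, Real.cos (k * (π * a / N)) = 1 := by
      intro k _
      have : (k : ℝ) * (π * a / N) = (k * t : ℤ) * (2 * π) := by
        subst ht; push_cast; field_simp
      rw [this, Real.cos_int_mul_two_pi]
    rw [Finset.sum_congr rfl this]
    simp
  · rw [if_neg hdvd]
    set φ : ℝ := π * a / N with hφ
    set z : ℂ := Complex.exp ((φ:ℂ) * Complex.I) with hz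
    have hz1 : z ≠ 1 := by
      intro h
      rw [hz, Complex.exp_eq_one_iff] at h
      obtain ⟨t, ht⟩ := h
      have : (φ : ℂ) = t * (2 * π) := by
        have h2 : (φ:ℂ) * Complex.I = ((t:ℂ) * (2 * π)) * Complex.I := by rw [ht]; ring
        exact mul_right_cancel₀ Complex.I_ne_zero h2
      have hφt : φ = t * (2 * π) := by exact_mod_cast this
      have hNr : (N : ℝ) ≠ 0 := hN0
      have : (a : ℝ) = (t * (2 * N) : ℤ) := by
        rw [hφ] at hφt
        field_simp at hφt
        push_cast
        have h3 : π * (a : ℝ) = π * ((t:ℝ) * (2 * N)) := by linear_combination π * hφt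
        have := mul_left_cancel₀ Real.pi_ne_zero h3
        linarith
      have ha : (a : ℤ) = t * (2 * N) := by exact_mod_cast this
      have : (2 * N : ℤ) ∣ (a : ℤ) := ⟨t, by linarith⟩
      rw [show ((2*N : ℤ)) = ((2*N : ℕ) : ℤ) by push_cast; ring] at this
      exact hdvd (Int.natCast_dvd_natCast.mp this)
    have key : ∑ k ∈ Finset.range N, Real.cos (k * φ)
        = ((z ^ N - 1) / (z - 1)).re := by
      rw [← geom_sum_eq hz1]
      rw [Complex.re_sum]
      apply Finset.sum_congr rfl
      intro k _
      rw [hz, ← Complex.exp_nat_mul]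
      rw [show (k : ℂ) * ((φ:ℂ) * Complex.I) = ((k * φ : ℝ) : ℂ) * Complex.I by push_cast; ring]
      rw [Complex.exp_ofReal_mul_I_re]
    have hzN : z ^ N = (-1 : ℂ) ^ a := by
      rw [hz, ← Complex.exp_nat_mul, ← Complex.exp_pi_mul_I, ← Complex.exp_nat_mul]
      have hNC : (N : ℂ) ≠ 0 := by exact_mod_cast Nat.cast_ne_zero.mpr (by omega)
      congr 1
      rw [hφ]; push_cast; field_simp
    rw [key, hzN]
    by_cases hev : Even a
    · rw [if_pos hev, hev.neg_one_pow]
      simp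
    · rw [if_neg hev, (Nat.not_even_iff_odd.mp hev).neg_one_pow]
      have : ((-1 : ℂ) - 1) = -2 := by ring
      rw [this]
      exact re_aux' φ hz1

private lemma mul_lt_iff'' (p q N : ℕ) (hN : 0 < N) : p * N < q * N ↔ p < q :=
  Nat.mul_lt_mul_right hN

theorem stmt1 (N n l j m : ℕ) (hN : 1 ≤ N) (hn : n ≤ N - 1) (hl : 1 ≤ l) (hlo : Odd l)
    (hj : j ≤ N - 1) (hm : m = l * N + j) :
    ((1 : ℝ) / 2 +
      ∑ k ∈ Finset.Icc 1 (N - 1),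
        Real.cos (k * π * (2 * m + 1) / (2 * N)) * Real.cos (k * π * (2 * n + 1) / (2 * N)))
      = if j = N - 1 - n then (N : ℝ) / 2 else 0 := by
  have hN0 : (N : ℝ) ≠ 0 := by positivity
  have hlN : N ≤ l * N := Nat.le_mul_of_pos_left N (by omega)
  have hmn : n ≤ m := by omega
  set a : ℕ := m + n + 1 with hadef
  set b : ℕ := m - n with hbdef
  have hbcast : (b : ℝ) = (m : ℝ) - n := by
    rw [hbdef, Nat.cast_sub hmn]
  -- product-to-sum rewrite
  have hterm : ∀ k ∈ Finset.Icc 1 (N-1),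
      Real.cos (k * π * (2*m+1) / (2*N)) * Real.cos (k * π * (2*n+1) / (2*N))
      = (Real.cos (k * (π * a / N)) + Real.cos (k * (π * b / N))) / 2 := by
    intro k _
    have hx : (k:ℝ) * (π * a / N) = k * π * (2*m+1)/(2*N) + k * π * (2*n+1)/(2*N) := by
      rw [hadef]; push_cast; field_simp; ring
    have hy : (k:ℝ) * (π * b / N) = k * π * (2*m+1)/(2*N) - k * π * (2*n+1)/(2*N) := by
      rw [hbcast]; field_simp; ring
    rw [hx, hy, Real.cos_add, Real.cos_sub]
    ring
  rw [Finset.sum_congr rfl hterm]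
  -- split range N = {0} ∪ Icc 1 (N-1)
  have hsplit : ∀ f : ℕ → ℝ, ∑ k ∈ Finset.range N, f k
      = f 0 + ∑ k ∈ Finset.Icc 1 (N-1), f k := by
    intro f
    rw [show Finset.range N = insert 0 (Finset.Icc 1 (N-1)) by
          ext x; simp [Finset.mem_range, Finset.mem_Icc]; omega,
        Finset.sum_insert (by simp)]
  have hmain : (1:ℝ)/2 + ∑ k ∈ Finset.Icc 1 (N-1),
      (Real.cos (k * (π * a / N)) + Real.cos (k * (π * b / N))) / 2
      = ((∑ k ∈ Finset.range N, Real.cos (k * (π * a / N)))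
        + (∑ k ∈ Finset.range N, Real.cos (k * (π * b / N)))) / 2 - 1/2 := by
    have h2 : ∑ k ∈ Finset.Icc 1 (N-1),
        (Real.cos (k * (π * a / N)) + Real.cos (k * (π * b / N))) / 2
        = (∑ k ∈ Finset.Icc 1 (N-1), Real.cos (k * (π * a / N))) / 2
          + (∑ k ∈ Finset.Icc 1 (N-1), Real.cos (k * (π * b / N))) / 2 := by
      rw [Finset.sum_div, Finset.sum_div, ← Finset.sum_add_distrib]
      exact Finset.sum_congr rfl (fun k _ => by ring)
    rw [hsplit (fun k => Real.cos (k * (π * a / N))),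
        hsplit (fun k => Real.cos (k * (π * b / N))), h2]
    norm_num
    ring
  rw [hmain, cos_sum_eq' N a hN, cos_sum_eq' N b hN]
  -- arithmetic facts
  have hab : a + b = 2 * m + 1 := by omega
  obtain ⟨c, hcl⟩ := hlo
  by_cases hc : j = N - 1 - n
  · -- a = (l+1) N, divisible by 2N; b odd
    have haval : a = (c + 1) * (2 * N) := by
      have : a = l * N + N := by omega
      rw [this, hcl]; ring
    have hda : 2 * N ∣ a := ⟨c + 1, by rw [haval]; ring⟩
    have hbodd : ¬ Even b := by
      rintro ⟨e, he⟩
      have : a = l * N + N := by omega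
      rw [hcl] at this
      have : a = (2*c+1) * N + N := this
      have h2 : a = 2 * ((c+1) * N) := by rw [this]; ring
      omega
    have hdb : ¬ 2 * N ∣ b := by
      intro h
      exact hbodd ((even_iff_two_dvd).mpr (dvd_trans ⟨N, rfl⟩ h))
    rw [if_pos hc, if_pos hda, if_neg hdb, if_neg hbodd]
    ring
  · have hda : ¬ 2 * N ∣ a := by
      rintro ⟨t, ht⟩
      have e1 : a = (2 * t) * N := by rw [ht]; ring
      have h1 : l * N < (2 * t) * N := by omega
      have h2 : (2 * t) * N < (l + 2) * N := by
        have e2 : (l + 2) * N = l * N + 2 * N := by ring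
        omega
      have h3 : l < 2 * t := (mul_lt_iff'' _ _ _ (by omega)).mp h1
      have h4 : 2 * t < l + 2 := (mul_lt_iff'' _ _ _ (by omega)).mp h2
      have h5 : 2 * t = l + 1 := by omega
      have e3 : (2 * t) * N = l * N + N := by rw [h5]; ring
      omega
    have hdb : ¬ 2 * N ∣ b := by
      rintro ⟨t, ht⟩
      have e1 : b = (2 * t) * N := by rw [ht]; ring
      have h1 : (l - 1) * N < (2 * t) * N := by
        have e4 : (l - 1) * N + N = l * N := by
          have h6 : l - 1 + 1 = l := by omega
          calc (l-1)*N + N = (l - 1 + 1) * N := by ring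
            _ = l * N := by rw [h6]
        omega
      have h2 : (2 * t) * N < (l + 1) * N := by
        have : (l + 1) * N = l * N + N := by ring
        omega
      have h3 : l - 1 < 2 * t := (mul_lt_iff'' _ _ _ (by omega)).mp h1
      have h4 : 2 * t < l + 1 := (mul_lt_iff'' _ _ _ (by omega)).mp h2
      omega
    rw [if_neg hc, if_neg hda, if_neg hdb]
    -- exactly one of a, b is even
    by_cases hea : Even a
    · have heb : ¬ Even b := by
        rw [Nat.even_iff] at hea ⊢
        omega
      rw [if_pos hea, if_neg heb]
      ring
    · have heb : Even b := by
        rw [Nat.even_iff] at hea ⊢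
        omega
      rw [if_neg hea, if_pos heb]
      ring
end

section
/- Let X be a random variable taking values in ℕ with PMF p_X, let N ≥ 1, and define the DCT coefficients A_k = (2/N) Σ_{n=0}^{N-1} p_X(n) cos(kπ(2n+1)/(2N)) and the approximate coefficients Â_k = (2/N) Re(ψ_X(kπ/N) e^{ikπ/(2N)}) where ψ_X(u) = E[e^{iuX}] = Σ_{n=0}^{∞} p_X(n) e^{iun}. Define p̂_X(n) = (1/2)Â_0 + Σ_{k=1}^{N-1} Â_k cos(kπ(2n+1)/(2N)). Then for all 0 ≤ n ≤ N-1, the approximation error satisfies p̂_X(n) − p_X(n) = Σ_{l=1}^{∞} (p_X(2lN + n) + p_X(2lN − 1 − n)). -/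
open Real


lemma fsum (N : ℕ) (hN : 0 < N) (j : ℤ) :
    ∑ k ∈ Finset.range N, Real.cos (k * j * π / N) =
      if (2*(N:ℤ)) ∣ j then (N:ℝ) else if Odd j then 1 else 0 := by
  have hNr : (N:ℝ) ≠ 0 := Nat.cast_ne_zero.mpr hN.ne'
  by_cases hd : (2*(N:ℤ)) ∣ j
  · obtain ⟨t, ht⟩ := hd
    rw [if_pos ⟨t, ht⟩]
    have : ∀ k ∈ Finset.range N, Real.cos (k * j * π / N) = 1 := by
      intro k _
      have harg : (k:ℝ) * j * π / N = ((k*t : ℤ):ℝ) * (2*π) := by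
        have hj : (j:ℝ) = 2*N*t := by exact_mod_cast congrArg (Int.cast : ℤ → ℝ) ht
        push_cast [hj]
        field_simp
      rw [harg, Real.cos_int_mul_two_pi]
    rw [Finset.sum_congr rfl this]
    simp
  · rw [if_neg hd]
    have hs : Real.sin ((j:ℝ)*π/(2*N)) ≠ 0 := by
      intro h
      rw [Real.sin_eq_zero_iff] at h
      obtain ⟨t, ht⟩ := h
      apply hd
      refine ⟨t, ?_⟩
      have hπ : π ≠ 0 := Real.pi_ne_zero
      have : (j:ℝ) = 2*N*t := by
        field_simp at ht
        have h' : ((2:ℝ)*N*t) * π = (j:ℝ) * π := by rw [← ht]; ring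
        have := mul_right_cancel₀ hπ h'
        linarith
      exact_mod_cast this
    -- telescoping
    set g : ℕ → ℝ := fun k => Real.sin ((2*(k:ℝ)-1) * ((j:ℝ)*π/N) / 2) with hg
    have key : ∀ k : ℕ, g (k+1) - g k = 2 * Real.sin ((j:ℝ)*π/(2*N)) * Real.cos (k * j * π / N) := by
      intro k
      rw [hg]
      simp only
      rw [Real.sin_sub_sin]
      have e1 : ((2*((k:ℝ)+1)-1) * ((j:ℝ)*π/N) / 2 - (2*(k:ℝ)-1) * ((j:ℝ)*π/N) / 2)/2 = (j:ℝ)*π/(2*N) := by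
        push_cast; field_simp; ring
      have e2 : ((2*((k:ℝ)+1)-1) * ((j:ℝ)*π/N) / 2 + (2*(k:ℝ)-1) * ((j:ℝ)*π/N) / 2)/2 = (k:ℝ) * j * π / N := by
        push_cast; field_simp; ring
      push_cast
      rw [e1, e2]
    have tel := Finset.sum_range_sub g N
    rw [Finset.sum_congr rfl (fun k _ => key k)] at tel
    rw [← Finset.mul_sum] at tel
    -- tel : 2 * sin(jπ/(2N)) * ∑ ... = g N - g 0
    have hg0 : g 0 = - Real.sin ((j:ℝ)*π/(2*N)) := by
      rw [hg]; simp only [Nat.cast_zero]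
      rw [show (2*(0:ℝ)-1) * ((j:ℝ)*π/N) / 2 = -((j:ℝ)*π/(2*N)) by ring]
      exact Real.sin_neg _
    by_cases hodd : Odd j
    · rw [if_pos hodd]
      obtain ⟨t, ht⟩ := hodd
      have hgN : g N = Real.sin ((j:ℝ)*π/(2*N)) := by
        rw [hg]; simp only
        have harg : (2*(N:ℝ)-1) * ((j:ℝ)*π/N) / 2 = (π - (j:ℝ)*π/(2*N)) + t * (2*π) := by
          have hj : (j:ℝ) = 2*t+1 := by exact_mod_cast congrArg (Int.cast : ℤ → ℝ) ht
          rw [hj]; field_simp; ring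
        rw [harg]
        rw [Real.sin_add_int_mul_two_pi, Real.sin_pi_sub]
      rw [hgN, hg0] at tel
      have h2 : 2 * Real.sin ((j:ℝ)*π/(2*N)) ≠ 0 := by
        intro h; apply hs; linarith
      have h3 : (2 * Real.sin ((j:ℝ)*π/(2*N))) * (∑ k ∈ Finset.range N, Real.cos (k * j * π / N)) = (2 * Real.sin ((j:ℝ)*π/(2*N))) * 1 := by
        rw [tel]; ring
      exact mul_left_cancel₀ h2 h3
    · rw [if_neg hodd]
      rw [Int.not_odd_iff_even] at hodd
      obtain ⟨t, ht⟩ := hodd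
      have hgN : g N = - Real.sin ((j:ℝ)*π/(2*N)) := by
        rw [hg]; simp only
        have harg : (2*(N:ℝ)-1) * ((j:ℝ)*π/N) / 2 = (-(j:ℝ)*π/(2*N)) + t * (2*π) := by
          have hj : (j:ℝ) = 2*t := by
            have := congrArg (Int.cast : ℤ → ℝ) ht; push_cast at this; linarith
          rw [hj]; field_simp; ring
        rw [harg, Real.sin_add_int_mul_two_pi]
        rw [show -(j:ℝ)*π/(2*N) = -((j:ℝ)*π/(2*N)) by ring, Real.sin_neg]
      rw [hgN, hg0] at tel
      have h2 : 2 * Real.sin ((j:ℝ)*π/(2*N)) ≠ 0 := by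
        intro h; apply hs; linarith
      have h3 : (2 * Real.sin ((j:ℝ)*π/(2*N))) * (∑ k ∈ Finset.range N, Real.cos (k * j * π / N)) = (2 * Real.sin ((j:ℝ)*π/(2*N))) * 0 := by
        rw [tel]; ring
      exact mul_left_cancel₀ h2 h3

lemma orth (N : ℕ) (hN : 0 < N) (m n : ℕ) :
    (1/(N:ℝ)) + (2/N) * ∑ k ∈ Finset.Icc 1 (N-1),
        Real.cos (k*π*(2*(m:ℝ)+1)/(2*N)) * Real.cos (k*π*(2*(n:ℝ)+1)/(2*N))
    = if ((2*(N:ℤ)) ∣ ((m:ℤ)-n) ∨ (2*(N:ℤ)) ∣ ((m:ℤ)+n+1)) then 1 else 0 := by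
  have hNr : (N:ℝ) ≠ 0 := Nat.cast_ne_zero.mpr hN.ne'
  set j1 : ℤ := (m:ℤ) - n with hj1
  set j2 : ℤ := (m:ℤ) + n + 1 with hj2
  -- rewrite each product as sum of cosines
  have hprod : ∀ k : ℕ, Real.cos (k*π*(2*(m:ℝ)+1)/(2*N)) * Real.cos (k*π*(2*(n:ℝ)+1)/(2*N))
      = (Real.cos (k * (j1:ℝ) * π / N) + Real.cos (k * (j2:ℝ) * π / N)) / 2 := by
    intro k
    have e1 : (k:ℝ) * (j1:ℝ) * π / N = k*π*(2*(m:ℝ)+1)/(2*N) - k*π*(2*(n:ℝ)+1)/(2*N) := by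
      rw [hj1]; push_cast; field_simp; ring
    have e2 : (k:ℝ) * (j2:ℝ) * π / N = k*π*(2*(m:ℝ)+1)/(2*N) + k*π*(2*(n:ℝ)+1)/(2*N) := by
      rw [hj2]; push_cast; field_simp; ring
    rw [e1, e2, Real.cos_sub, Real.cos_add]; ring
  rw [Finset.sum_congr rfl (fun k _ => hprod k)]
  -- relate Icc 1 (N-1) to range N
  have hins : Finset.range N = insert 0 (Finset.Icc 1 (N-1)) := by
    ext x; simp [Finset.mem_range, Finset.mem_Icc, Finset.mem_insert]; omega
  have hsplit : ∀ (F : ℕ → ℝ), ∑ k ∈ Finset.range N, F k = F 0 + ∑ k ∈ Finset.Icc 1 (N-1), F k := by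
    intro F
    rw [hins, Finset.sum_insert (by simp)]
  have h1 := fsum N hN j1
  have h2 := fsum N hN j2
  rw [hsplit] at h1 h2
  simp only [Nat.cast_zero, zero_mul, zero_div, Real.cos_zero] at h1 h2
  -- now express goal sum via h1 h2
  have hsum2 : ∑ k ∈ Finset.Icc 1 (N-1), (Real.cos (k * (j1:ℝ) * π / N) + Real.cos (k * (j2:ℝ) * π / N)) / 2
      = ((∑ k ∈ Finset.Icc 1 (N-1), Real.cos (k * (j1:ℝ) * π / N)) + ∑ k ∈ Finset.Icc 1 (N-1), Real.cos (k * (j2:ℝ) * π / N)) / 2 := by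
    rw [← Finset.sum_add_distrib, Finset.sum_div]
  rw [hsum2]
  -- parity facts
  have hpar : Odd (j1 + j2) := ⟨(m:ℤ), by rw [hj1, hj2]; ring⟩
  by_cases hd1 : (2*(N:ℤ)) ∣ j1
  · have hev1 : Even j1 := (even_iff_two_dvd.mpr (dvd_trans ⟨(N:ℤ), rfl⟩ hd1))
    have hodd2 : Odd j2 := by
      rcases Int.even_or_odd j2 with h | h
      · exact absurd hpar (by simp [hev1.add h, Int.not_odd_iff_even])
      · exact h
    have hnd2 : ¬ (2*(N:ℤ)) ∣ j2 := by
      intro h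
      have : Even j2 := (even_iff_two_dvd.mpr (dvd_trans ⟨(N:ℤ), rfl⟩ h))
      exact (Int.not_odd_iff_even.mpr this) hodd2
    rw [if_pos hd1, if_neg hnd2, if_pos hodd2] at *
    rw [if_pos (Or.inl hd1)]
    have e1 : ∑ k ∈ Finset.Icc 1 (N-1), Real.cos (k * (j1:ℝ) * π / N) = (N:ℝ) - 1 := by linarith
    have e2 : ∑ k ∈ Finset.Icc 1 (N-1), Real.cos (k * (j2:ℝ) * π / N) = 0 := by linarith
    rw [e1, e2]; field_simp; try ring
  · by_cases hd2 : (2*(N:ℤ)) ∣ j2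
    · have hev2 : Even j2 := (even_iff_two_dvd.mpr (dvd_trans ⟨(N:ℤ), rfl⟩ hd2))
      have hodd1 : Odd j1 := by
        rcases Int.even_or_odd j1 with h | h
        · exact absurd hpar (by simp [h.add hev2, Int.not_odd_iff_even])
        · exact h
      rw [if_neg hd1, if_pos hodd1] at h1
      rw [if_pos hd2] at h2
      rw [if_pos (Or.inr hd2)]
      have e1 : ∑ k ∈ Finset.Icc 1 (N-1), Real.cos (k * (j1:ℝ) * π / N) = 0 := by linarith
      have e2 : ∑ k ∈ Finset.Icc 1 (N-1), Real.cos (k * (j2:ℝ) * π / N) = (N:ℝ) - 1 := by linarith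
      rw [e1, e2]; field_simp; try ring
    · rw [if_neg hd1] at h1
      rw [if_neg hd2] at h2
      rw [if_neg (by tauto)]
      -- exactly one of j1 j2 odd
      rcases Int.even_or_odd j1 with hev1 | hodd1
      · have hodd2 : Odd j2 := by
          rcases Int.even_or_odd j2 with h | h
          · exact absurd hpar (by simp [hev1.add h, Int.not_odd_iff_even])
          · exact h
        rw [if_neg (Int.not_odd_iff_even.mpr hev1)] at h1
        rw [if_pos hodd2] at h2
        have e1 : ∑ k ∈ Finset.Icc 1 (N-1), Real.cos (k * (j1:ℝ) * π / N) = -1 := by linarith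
        have e2 : ∑ k ∈ Finset.Icc 1 (N-1), Real.cos (k * (j2:ℝ) * π / N) = 0 := by linarith
        rw [e1, e2]; field_simp; try ring
      · have hev2 : Even j2 := by
          rcases Int.even_or_odd j2 with h | h
          · exact h
          · exact absurd hpar (by simp [hodd1.add_odd h, Int.not_odd_iff_even]) 
        rw [if_pos hodd1] at h1
        rw [if_neg (Int.not_odd_iff_even.mpr hev2)] at h2
        have e1 : ∑ k ∈ Finset.Icc 1 (N-1), Real.cos (k * (j1:ℝ) * π / N) = 0 := by linarith
        have e2 : ∑ k ∈ Finset.Icc 1 (N-1), Real.cos (k * (j2:ℝ) * π / N) = -1 := by linarith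
        rw [e1, e2]; field_simp; try ring

lemma summable_aux (p : ℕ → ℝ) (hp : ∀ n, 0 ≤ p n) (hs : Summable p) (r : ℕ → ℝ)
    (hr : ∀ m, |r m| ≤ 1) : Summable (fun m => p m * r m) := by
  apply Summable.of_norm_bounded (hs.mul_right 1)
  intro m
  rw [Real.norm_eq_abs, abs_mul, abs_of_nonneg (hp m)]
  exact mul_le_mul_of_nonneg_left (hr m) (hp m)

theorem stmt2 (p : ℕ → ℝ) (hp : ∀ n, 0 ≤ p n) (hsum : HasSum p 1)
    (N : ℕ) (hN : 1 ≤ N) (n : ℕ) (hn : n ≤ N - 1)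
    (ψ : ℝ → ℂ) (hψ : ∀ u, ψ u = ∑' m : ℕ, (p m : ℂ) * Complex.exp (Complex.I * u * m))
    (A : ℕ → ℝ)
    (hA : ∀ k, A k = (2 / N) * (ψ (k * π / N) * Complex.exp (Complex.I * k * π / (2 * N))).re)
    (phat : ℕ → ℝ)
    (hphat : ∀ m, phat m = A 0 / 2 +
      ∑ k ∈ Finset.Icc 1 (N - 1), A k * Real.cos (k * π * (2 * m + 1) / (2 * N))) :
    phat n - p n = ∑' l : ℕ, (p (2 * (l + 1) * N + n) + p (2 * (l + 1) * N - 1 - n)) := by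
  have hN0 : 0 < N := hN
  have hNr : (N:ℝ) ≠ 0 := Nat.cast_ne_zero.mpr hN0.ne'
  have hNc : (N:ℂ) ≠ 0 := Nat.cast_ne_zero.mpr hN0.ne'
  have hsp : Summable p := hsum.summable
  -- step A
  have hAk : ∀ k : ℕ, A k = (2 / N) * ∑' m : ℕ, p m * Real.cos (k*π*(2*(m:ℝ)+1)/(2*N)) := by
    intro k
    rw [hA k, hψ]
    have hsc : Summable (fun m : ℕ => (p m : ℂ) * Complex.exp (Complex.I * ((k:ℝ)*π/(N:ℝ) : ℝ) * m)) := by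
      apply Summable.of_norm_bounded hsp
      intro m
      rw [norm_mul, Complex.norm_real, Real.norm_eq_abs, abs_of_nonneg (hp m)]
      have harg : (Complex.I * ((k:ℝ)*π/(N:ℝ) : ℝ) * m) = ((((k:ℝ)*π/(N:ℝ)*m : ℝ)) : ℂ) * Complex.I := by
        push_cast; ring
      rw [harg, Complex.norm_exp_ofReal_mul_I]
      simp
    rw [← tsum_mul_right]
    have hsc2 : Summable (fun m : ℕ => (p m : ℂ) * Complex.exp (Complex.I * ((k:ℝ)*π/(N:ℝ) : ℝ) * m) * Complex.exp (Complex.I * k * π / (2 * N))) :=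
      hsc.mul_right _
    rw [Complex.re_tsum hsc2]
    congr 1
    apply tsum_congr
    intro m
    have hexp : Complex.exp (Complex.I * ((k:ℝ)*π/(N:ℝ) : ℝ) * m) * Complex.exp (Complex.I * k * π / (2 * N))
        = Complex.exp (((k*π*(2*(m:ℝ)+1)/(2*N) : ℝ) : ℂ) * Complex.I) := by
      rw [← Complex.exp_add]
      congr 1
      push_cast
      field_simp
    rw [mul_assoc, hexp]
    simp only [Complex.mul_re, Complex.ofReal_re, Complex.ofReal_im, zero_mul, sub_zero,
      Complex.exp_ofReal_mul_I_re]
  -- notation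
  set c : ℕ → ℕ → ℝ := fun k m => Real.cos (k*π*(2*(m:ℝ)+1)/(2*N)) with hc
  have hcb : ∀ k m, |c k m| ≤ 1 := fun k m => Real.abs_cos_le_one _
  -- step B : phat n as a single tsum
  have hFs : ∀ k : ℕ, Summable (fun m => p m * ((2/(N:ℝ)) * (c k m * c k n))) := by
    intro k
    have : ∀ m, |(2/(N:ℝ)) * (c k m * c k n)| ≤ 1 * ((2/(N:ℝ)) * 1) := by
      intro m
      rw [abs_mul, abs_of_nonneg (by positivity : (0:ℝ) ≤ 2/(N:ℝ)), abs_mul]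
      have h1 := hcb k m
      have h2 := hcb k n
      have := mul_le_one₀ h1 (abs_nonneg _) h2
      nlinarith [mul_le_mul_of_nonneg_left this (by positivity : (0:ℝ) ≤ 2/(N:ℝ))]
    apply Summable.of_norm_bounded (hsp.mul_right ((2/(N:ℝ)) * 1))
    intro m
    rw [Real.norm_eq_abs, abs_mul, abs_of_nonneg (hp m)]
    calc p m * |(2/(N:ℝ)) * (c k m * c k n)| ≤ p m * (1 * ((2/(N:ℝ)) * 1)) :=
          mul_le_mul_of_nonneg_left (this m) (hp m)
      _ = p m * ((2/(N:ℝ)) * 1) := by ring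
  have hw : phat n = ∑' m : ℕ, p m * ((1/(N:ℝ)) + (2/(N:ℝ)) * ∑ k ∈ Finset.Icc 1 (N-1), c k m * c k n) := by
    rw [hphat n]
    have h0 : A 0 / 2 = ∑' m : ℕ, p m * (1/(N:ℝ)) := by
      rw [hAk 0]
      rw [show ∑' m : ℕ, p m * (1/(N:ℝ)) = (∑' m : ℕ, p m) * (1/(N:ℝ)) from tsum_mul_right]
      rw [show ∑' m : ℕ, p m * Real.cos (((0:ℕ):ℝ)*π*(2*(m:ℝ)+1)/(2*N)) = ∑' m : ℕ, p m from
        tsum_congr fun m => by norm_num]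
      ring
    have hk : ∀ k ∈ Finset.Icc 1 (N-1), A k * Real.cos ((k:ℝ) * π * (2 * (n:ℝ) + 1) / (2 * N))
        = ∑' m : ℕ, p m * ((2/(N:ℝ)) * (c k m * c k n)) := by
      intro k _
      rw [hAk k]
      have : (2/(N:ℝ)) * (∑' m : ℕ, p m * c k m) * c k n
          = (∑' m : ℕ, p m * c k m) * ((2/(N:ℝ)) * c k n) := by ring
      rw [hc]
      simp only
      rw [this, ← tsum_mul_right]
      apply tsum_congr; intro m; ring
    rw [h0, Finset.sum_congr rfl hk, ← Summable.tsum_finsetSum (fun k _ => hFs k)]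
    rw [← Summable.tsum_add (hsp.mul_right (1/(N:ℝ))) (summable_sum (fun k _ => hFs k))]
    apply tsum_congr; intro m
    rw [mul_add, Finset.mul_sum, Finset.mul_sum]
  -- step C : indicator
  have hind : phat n = ∑' m : ℕ,
      (if ((2*(N:ℤ)) ∣ ((m:ℤ)-n) ∨ (2*(N:ℤ)) ∣ ((m:ℤ)+n+1)) then p m else 0) := by
    rw [hw]
    apply tsum_congr; intro m
    rw [hc]
    simp only
    rw [orth N hN0 m n]
    split_ifs <;> ring
  -- disjointness of the two congruences
  have hdisj : ∀ m : ℕ, ¬((2*(N:ℤ)) ∣ ((m:ℤ)-n) ∧ (2*(N:ℤ)) ∣ ((m:ℤ)+n+1)) := by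
    rintro m ⟨h1, h2⟩
    have h2d : (2:ℤ) ∣ 2*(N:ℤ) := ⟨N, rfl⟩
    have he1 : Even ((m:ℤ)-n) := (even_iff_two_dvd.mpr (dvd_trans h2d h1))
    have he2 : Even ((m:ℤ)+n+1) := (even_iff_two_dvd.mpr (dvd_trans h2d h2))
    have : Even (((m:ℤ)-n) + ((m:ℤ)+n+1)) := he1.add he2
    have h3 : Even (2*(m:ℤ)+1) := by
      convert this using 1; ring
    rcases h3 with ⟨t, ht⟩
    omega
  -- split indicator into two
  set S1 : ℕ → ℝ := fun m => if (2*(N:ℤ)) ∣ ((m:ℤ)-n) then p m else 0 with hS1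
  set S2 : ℕ → ℝ := fun m => if (2*(N:ℤ)) ∣ ((m:ℤ)+n+1) then p m else 0 with hS2
  have hS1nn : ∀ m, 0 ≤ S1 m := fun m => by rw [hS1]; dsimp; split_ifs; exacts [hp m, le_refl 0]
  have hS2nn : ∀ m, 0 ≤ S2 m := fun m => by rw [hS2]; dsimp; split_ifs; exacts [hp m, le_refl 0]
  have hS1le : ∀ m, S1 m ≤ p m := fun m => by rw [hS1]; dsimp; split_ifs; exacts [le_refl _, hp m]
  have hS2le : ∀ m, S2 m ≤ p m := fun m => by rw [hS2]; dsimp; split_ifs; exacts [le_refl _, hp m]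
  have hS1s : Summable S1 := Summable.of_nonneg_of_le hS1nn hS1le hsp
  have hS2s : Summable S2 := Summable.of_nonneg_of_le hS2nn hS2le hsp
  have hsplit2 : phat n = (∑' m, S1 m) + ∑' m, S2 m := by
    rw [hind, ← Summable.tsum_add hS1s hS2s]
    apply tsum_congr; intro m
    rw [hS1, hS2]
    dsimp only
    by_cases h1 : (2*(N:ℤ)) ∣ ((m:ℤ)-n) <;> by_cases h2 : (2*(N:ℤ)) ∣ ((m:ℤ)+n+1)
    · exact absurd ⟨h1, h2⟩ (hdisj m)
    · rw [if_pos (Or.inl h1), if_pos h1, if_neg h2]; ring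
    · rw [if_pos (Or.inr h2), if_neg h1, if_pos h2]; ring
    · rw [if_neg (by tauto), if_neg h1, if_neg h2]; ring
  have hn' : n + 1 ≤ N := by omega
  -- first series
  have hinj1 : Function.Injective (fun l : ℕ => 2*l*N + n) := by
    intro a b h
    simp only at h
    have h1 : 2*a*N = 2*b*N := by omega
    have h2 : a * (2*N) = b * (2*N) := by
      rw [show a * (2*N) = 2*a*N by ring, show b * (2*N) = 2*b*N by ring]; exact h1
    exact Nat.eq_of_mul_eq_mul_right (by omega) h2
  have hinj1' : Function.Injective (fun l : ℕ => 2*(l+1)*N + n) := by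
    intro a b h
    simp only at h
    exact Nat.succ_injective (hinj1 (show 2*(a+1)*N + n = 2*(b+1)*N + n from h))
  have he2sum : ∀ l : ℕ, (2*(l+1)*N - 1 - n) + (n+1) = 2*(l+1)*N := by
    intro l
    have h1 : N ≤ 2*(l+1)*N := Nat.le_mul_of_pos_left N (by omega)
    set M := 2*(l+1)*N with hM
    clear_value M
    omega
  have hinj2 : Function.Injective (fun l : ℕ => 2*(l+1)*N - 1 - n) := by
    intro a b h
    simp only at h
    have ha := he2sum a
    have hb := he2sum b
    have h2 : 2*(a+1)*N = 2*(b+1)*N := by omega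
    have h3 : (a+1) * (2*N) = (b+1) * (2*N) := by
      rw [show (a+1) * (2*N) = 2*(a+1)*N by ring, show (b+1) * (2*N) = 2*(b+1)*N by ring]; exact h2
    exact Nat.succ_injective (Nat.eq_of_mul_eq_mul_right (by omega) h3)
  have ht1 : ∑' m, S1 m = p n + ∑' l : ℕ, p (2*(l+1)*N + n) := by
    have hrange : Function.support S1 ⊆ Set.range (fun l : ℕ => 2*l*N + n) := by
      intro m hm
      have hP : (2*(N:ℤ)) ∣ ((m:ℤ)-n) := by
        by_contra h
        apply hm
        rw [hS1]; dsimp only; rw [if_neg h]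
      obtain ⟨t, ht⟩ := hP
      have ht0 : 0 ≤ t := by
        by_contra h
        push_neg at h
        have h1 : t ≤ -1 := by omega
        have h2 : (0:ℤ) ≤ (m:ℤ) := Int.natCast_nonneg m
        have h3 : ((n:ℤ)) < 2*N := by
          have : (n:ℤ) < N := by exact_mod_cast (show n < N by omega)
          have : (0:ℤ) < N := by exact_mod_cast hN0
          omega
        nlinarith
      refine ⟨t.toNat, ?_⟩
      have hcast : ((2*t.toNat*N + n : ℕ) : ℤ) = (m:ℤ) := by
        push_cast [Int.toNat_of_nonneg ht0]
        linarith
      exact_mod_cast hcast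
    rw [← Function.Injective.tsum_eq hinj1 hrange]
    have hq : ∀ l : ℕ, S1 (2*l*N + n) = p (2*l*N + n) := by
      intro l
      rw [hS1]; dsimp only
      rw [if_pos ⟨(l:ℤ), by push_cast; ring⟩]
    rw [tsum_congr (fun l => hq l)]
    rw [Summable.tsum_eq_zero_add (f := fun l : ℕ => p (2*l*N + n)) (hsp.comp_injective hinj1)]
    norm_num
  have ht2 : ∑' m, S2 m = ∑' l : ℕ, p (2*(l+1)*N - 1 - n) := by
    have hrange : Function.support S2 ⊆ Set.range (fun l : ℕ => 2*(l+1)*N - 1 - n) := by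
      intro m hm
      have hP : (2*(N:ℤ)) ∣ ((m:ℤ)+n+1) := by
        by_contra h
        apply hm
        rw [hS2]; dsimp only; rw [if_neg h]
      obtain ⟨t, ht⟩ := hP
      have ht1' : 1 ≤ t := by
        by_contra h
        push_neg at h
        have h1 : t ≤ 0 := by omega
        have h2 : (0:ℤ) ≤ (m:ℤ) := Int.natCast_nonneg m
        have h3 : (0:ℤ) < N := by exact_mod_cast hN0
        nlinarith
      refine ⟨t.toNat - 1, ?_⟩
      have htn : (t.toNat - 1) + 1 = t.toNat := by omega
      show 2*((t.toNat-1)+1)*N - 1 - n = m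
      rw [htn]
      have hcast : (m:ℤ) + n + 1 = ((2*t.toNat*N : ℕ) : ℤ) := by
        push_cast [Int.toNat_of_nonneg (by omega : (0:ℤ) ≤ t)]
        linarith
      have hnat : m + n + 1 = 2*t.toNat*N := by exact_mod_cast hcast
      have h1 : N ≤ 2*t.toNat*N := Nat.le_mul_of_pos_left N (by omega)
      set M := 2*t.toNat*N with hM
      clear_value M
      omega
    rw [← Function.Injective.tsum_eq hinj2 hrange]
    apply tsum_congr; intro l
    rw [hS2]; dsimp only
    rw [if_pos ?_]
    refine ⟨(l:ℤ)+1, ?_⟩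
    have := he2sum l
    have hcast : ((2*(l+1)*N - 1 - n : ℕ) : ℤ) + (n+1) = ((2*(l+1)*N : ℕ) : ℤ) := by
      exact_mod_cast congrArg (Nat.cast : ℕ → ℤ) this
    push_cast at hcast
    linarith
  have hRHS : ∑' l : ℕ, (p (2*(l+1)*N + n) + p (2*(l+1)*N - 1 - n))
      = (∑' l : ℕ, p (2*(l+1)*N + n)) + ∑' l : ℕ, p (2*(l+1)*N - 1 - n) :=
    Summable.tsum_add (hsp.comp_injective hinj1') (hsp.comp_injective hinj2)
  have hfin : phat n = p n + ((∑' l : ℕ, p (2*(l+1)*N + n)) + ∑' l : ℕ, p (2*(l+1)*N - 1 - n)) := by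
    rw [hsplit2, ht1, ht2]; ring
  rw [show (fun l : ℕ => p (2 * (l + 1) * N + n) + p (2 * (l + 1) * N - 1 - n)) = fun l : ℕ => p (2*(l+1)*N + n) + p (2*(l+1)*N - 1 - n) from rfl] at *
  rw [hfin]
  rw [hRHS]
  ring
end

section
/- With the setup of the discrete COS method (p̂_X defined from the characteristic function as above), the approximation always overestimates the true PMF: for every n with 0 ≤ n ≤ N-1, p̂_X(n) ≥ p_X(n). -/
open Real

private lemma trigsum' (N : ℕ) (hN : 1 ≤ N) (j : ℤ) :
    ∑ k ∈ Finset.range N, Real.cos (k * j * π / N)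
      = if (2 * (N:ℤ)) ∣ j then (N:ℝ) else if Odd j then 1 else 0 := by
  have hN0 : (N:ℝ) ≠ 0 := by positivity
  have hN0c : (N:ℂ) ≠ 0 := by exact_mod_cast (by exact_mod_cast hN0 : ((N:ℝ):ℂ) ≠ 0)
  by_cases hd : (2 * (N:ℤ)) ∣ j
  · obtain ⟨t, ht⟩ := hd
    rw [if_pos ⟨t, ht⟩]
    have : ∀ k ∈ Finset.range N, Real.cos (k * j * π / N) = 1 := by
      intro k _
      have : (k:ℝ) * j * π / N = (k * t : ℤ) * (2 * π) := by
        push_cast [ht]; field_simp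
      rw [this, Real.cos_int_mul_two_pi]
    rw [Finset.sum_congr rfl this, Finset.sum_const, Finset.card_range]
    simp
  · rw [if_neg hd]
    set θ : ℝ := j * π / N with hθ
    set x : ℂ := Complex.exp (θ * Complex.I) with hx
    have hπ : (π:ℝ) ≠ 0 := Real.pi_ne_zero
    have hx1 : x ≠ 1 := by
      rw [hx, Ne, Complex.exp_eq_one_iff]
      rintro ⟨m, hm⟩
      have hm' : (θ:ℂ) * Complex.I = ((2*π*m : ℝ) : ℂ) * Complex.I := by
        rw [hm]; push_cast; ring
      have hθm : θ = 2 * π * m := by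
        have := congrArg Complex.re (mul_right_cancel₀ Complex.I_ne_zero hm')
        simpa using this
      apply hd
      refine ⟨m, ?_⟩
      have h1 : (j:ℝ) * π = (2 * N * m) * π := by
        rw [hθ] at hθm
        field_simp at hθm
        rw [hθm]; ring
      have : (j : ℝ) = 2 * N * m := mul_right_cancel₀ hπ h1
      exact_mod_cast this
    have hre : ∀ k : ℕ, Real.cos (k * j * π / N) = (x ^ k).re := by
      intro k
      rw [hx, ← Complex.exp_nat_mul]
      have : (k : ℂ) * ((θ:ℝ) * Complex.I) = ((k * θ : ℝ) : ℂ) * Complex.I := by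
        push_cast; ring
      rw [this, Complex.exp_ofReal_mul_I_re]
      congr 1
      rw [hθ]; ring
    rw [Finset.sum_congr rfl (fun k _ => hre k), ← Complex.re_sum, geom_sum_eq hx1]
    have hθc : ((θ:ℝ):ℂ) = (j:ℂ) * π / N := by push_cast [hθ]; ring
    have hxN : x ^ N = (-1 : ℂ) ^ j := by
      rw [hx, ← Complex.exp_nat_mul]
      have : (N : ℂ) * ((θ:ℝ) * Complex.I) = (j : ℂ) * (π * Complex.I) := by
        rw [hθc]; field_simp
      rw [this, Complex.exp_int_mul, Complex.exp_pi_mul_I]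
    have hxre : x.re = Real.cos θ := by rw [hx]; exact Complex.exp_ofReal_mul_I_re θ
    have hxim : x.im = Real.sin θ := by
      rw [hx]; simpa using Complex.exp_ofReal_mul_I_im θ
    rcases Int.even_or_odd j with he | ho
    · rw [if_neg (by simp [Int.not_odd_iff_even.mpr he])]
      rw [hxN, he.neg_one_zpow]
      simp
    · rw [if_pos ho, hxN, Odd.neg_one_zpow ho]
      have hcos : Real.cos θ ≠ 1 := by
        intro hc
        have hsin : Real.sin θ = 0 := by nlinarith [Real.sin_sq_add_cos_sq θ]
        exact hx1 (Complex.ext (by rw [hxre, hc]; rfl) (by rw [hxim, hsin]; rfl))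
      have hns : Complex.normSq (x - 1) = 2 - 2 * Real.cos θ := by
        rw [Complex.normSq_apply]
        simp only [Complex.sub_re, Complex.sub_im, hxre, hxim, Complex.one_re, Complex.one_im]
        nlinarith [Real.sin_sq_add_cos_sq θ]
      have h2 : 2 - 2 * Real.cos θ ≠ 0 := by
        intro h; exact hcos (by linarith)
      rw [Complex.div_re, hns]
      simp only [Complex.sub_re, Complex.sub_im, hxre, hxim, Complex.one_re, Complex.one_im]
      norm_num
      field_simp
      ring

private lemma kernel_key' (N : ℕ) (hN : 1 ≤ N) (n m : ℕ) :
    1 + 2 * ∑ k ∈ Finset.Icc 1 (N-1),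
      Real.cos (k*π*(2*m+1)/(2*N)) * Real.cos (k*π*(2*n+1)/(2*N))
    = (if (2*(N:ℤ)) ∣ ((m:ℤ) - n) then (N:ℝ) else if Odd ((m:ℤ)-n) then 1 else 0)
    + (if (2*(N:ℤ)) ∣ ((m:ℤ)+n+1) then (N:ℝ) else if Odd ((m:ℤ)+n+1) then 1 else 0) - 1 := by
  have hN0 : (N:ℝ) ≠ 0 := by positivity
  rw [← trigsum' N hN ((m:ℤ)-n), ← trigsum' N hN ((m:ℤ)+n+1)]
  have hIcc : Finset.Icc 1 (N-1) = Finset.Ico 1 N := by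
    rw [← Finset.Ico_add_one_right_eq_Icc]; congr 1; omega
  rw [hIcc]
  have e1 : ∀ j : ℤ, ∑ k ∈ Finset.Ico 1 N, Real.cos (k * j * π / N)
      = ∑ k ∈ Finset.range N, Real.cos (k * j * π / N) - 1 := by
    intro j
    rw [Finset.sum_Ico_eq_sub _ hN, Finset.sum_range_one]
    norm_num
  have e2 : ∀ k ∈ Finset.Ico 1 N,
      2 * (Real.cos (k*π*(2*m+1)/(2*N)) * Real.cos (k*π*(2*n+1)/(2*N)))
      = Real.cos (k * ((m:ℤ)-n) * π / N) + Real.cos (k * ((m:ℤ)+n+1) * π / N) := by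
    intro k _
    have ha : (k:ℝ) * ((m:ℤ)-n) * π / N
        = (k*π*(2*m+1)/(2*N)) - (k*π*(2*n+1)/(2*N)) := by
      push_cast; field_simp; ring
    have hb : (k:ℝ) * ((m:ℤ)+n+1) * π / N
        = (k*π*(2*m+1)/(2*N)) + (k*π*(2*n+1)/(2*N)) := by
      push_cast; field_simp; ring
    rw [ha, hb, Real.cos_sub, Real.cos_add]; ring
  rw [Finset.mul_sum, Finset.sum_congr rfl e2, Finset.sum_add_distrib]
  have e1a := e1 ((m:ℤ)-n)
  have e1b := e1 ((m:ℤ)+n+1)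
  push_cast at e1a e1b ⊢
  rw [e1a, e1b]; ring

private lemma key_nonneg' (N : ℕ) (hN : 1 ≤ N) (n m : ℕ) :
    0 ≤ 1 + 2 * ∑ k ∈ Finset.Icc 1 (N-1),
      Real.cos (k*π*(2*m+1)/(2*N)) * Real.cos (k*π*(2*n+1)/(2*N)) := by
  rw [kernel_key' N hN n m]
  have hNpos : (0:ℝ) ≤ N := Nat.cast_nonneg N
  have hodd : ∀ j : ℤ, Odd j → ¬ (2*(N:ℤ)) ∣ j := by
    rintro j hoj ⟨t, ht⟩
    exact (Int.not_odd_iff_even.mpr ⟨N*t, by linarith⟩) hoj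
  rcases Int.even_or_odd ((m:ℤ) - n) with he | ho
  · have ho2 : Odd ((m:ℤ)+n+1) := by
      rcases he with ⟨t, ht⟩; exact ⟨n + t, by omega⟩
    rw [if_neg (hodd _ ho2), if_pos ho2]
    split_ifs with h1 h2 <;> linarith
  · have he2 : Even ((m:ℤ)+n+1) := by
      rcases ho with ⟨t, ht⟩; exact ⟨n + t + 1, by omega⟩
    rw [if_neg (hodd _ ho), if_pos ho,
      if_neg (fun h => (Int.not_odd_iff_even.mpr he2) h)]
    split_ifs with h1 <;> linarith

private lemma key_self' (N : ℕ) (hN : 1 ≤ N) (n : ℕ) :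
    1 + 2 * ∑ k ∈ Finset.Icc 1 (N-1),
      Real.cos (k*π*(2*n+1)/(2*N)) * Real.cos (k*π*(2*n+1)/(2*N)) = N := by
  rw [kernel_key' N hN n n]
  have ho2 : Odd ((n:ℤ)+n+1) := ⟨n, by ring⟩
  have hodd : ¬ (2*(N:ℤ)) ∣ ((n:ℤ)+n+1) := by
    rintro ⟨t, ht⟩
    exact (Int.not_odd_iff_even.mpr ⟨N*t, by linarith⟩) ho2
  rw [if_pos (by simp : (2*(N:ℤ)) ∣ ((n:ℤ) - n)), if_neg hodd, if_pos ho2]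
  ring

private lemma A_eq' (p : ℕ → ℝ) (hp : ∀ n, 0 ≤ p n) (hsum : HasSum p 1)
    (N : ℕ) (hN : 1 ≤ N)
    (ψ : ℝ → ℂ) (hψ : ∀ u, ψ u = ∑' m : ℕ, (p m : ℂ) * Complex.exp (Complex.I * u * m))
    (A : ℕ → ℝ)
    (hA : ∀ k, A k = (2 / N) * (ψ (k * π / N) * Complex.exp (Complex.I * k * π / (2 * N))).re)
    (k : ℕ) :
    A k = (2 / N) * ∑' m : ℕ, p m * Real.cos (k * π * (2*m+1) / (2*N)) := by
  have hN0 : (N:ℝ) ≠ 0 := by positivity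
  rw [hA k, hψ]
  congr 1
  have step1 : (∑' m : ℕ, (p m : ℂ) * Complex.exp (Complex.I * ((k:ℝ) * π / N) * m))
        * Complex.exp (Complex.I * k * π / (2 * N))
      = ∑' m : ℕ, (p m : ℂ) * Complex.exp (((k * π * (2*m+1) / (2*N) : ℝ) : ℂ) * Complex.I) := by
    rw [← tsum_mul_right]
    congr 1
    funext m
    rw [mul_assoc, ← Complex.exp_add]
    congr 2
    push_cast
    field_simp
  push_cast at step1 ⊢
  rw [step1, Complex.re_tsum]
  · congr 1
    funext m
    rw [Complex.re_ofReal_mul]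
    congr 1
    rw [show ((k:ℂ) * ↑π * (2*(m:ℂ)+1)/(2*(N:ℂ))) = ((k * π * (2*m+1)/(2*N) : ℝ) : ℂ) by push_cast; ring,
      Complex.exp_ofReal_mul_I_re]
  · apply Summable.of_norm
    have : ∀ m : ℕ, ‖(p m : ℂ) * Complex.exp (((k * π * (2*m+1) / (2*N) : ℝ) : ℂ) * Complex.I)‖ = p m := by
      intro m
      rw [norm_mul, Complex.norm_real, Real.norm_eq_abs, abs_of_nonneg (hp m),
        Complex.norm_exp_ofReal_mul_I, mul_one]
    push_cast at this
    rw [funext this]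
    exact hsum.summable

theorem stmt3 (p : ℕ → ℝ) (hp : ∀ n, 0 ≤ p n) (hsum : HasSum p 1)
    (N : ℕ) (hN : 1 ≤ N) (n : ℕ) (hn : n ≤ N - 1)
    (ψ : ℝ → ℂ) (hψ : ∀ u, ψ u = ∑' m : ℕ, (p m : ℂ) * Complex.exp (Complex.I * u * m))
    (A : ℕ → ℝ)
    (hA : ∀ k, A k = (2 / N) * (ψ (k * π / N) * Complex.exp (Complex.I * k * π / (2 * N))).re)
    (phat : ℕ → ℝ)
    (hphat : ∀ m, phat m = A 0 / 2 +
      ∑ k ∈ Finset.Icc 1 (N - 1), A k * Real.cos (k * π * (2 * m + 1) / (2 * N))) :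
    p n ≤ phat n := by
  have hN0 : (N:ℝ) ≠ 0 := by positivity
  have hsp : Summable p := hsum.summable
  have hA' := A_eq' p hp hsum N hN ψ hψ A hA
  set c : ℕ → ℕ → ℝ := fun k m => Real.cos (k*π*(2*m+1)/(2*N)) with hc
  have hck : ∀ k : ℕ, Summable (fun m => p m * c k m) := by
    intro k
    apply Summable.of_norm_bounded hsp
    intro m
    rw [Real.norm_eq_abs, abs_mul, abs_of_nonneg (hp m)]
    exact mul_le_of_le_one_right (hp m) (Real.abs_cos_le_one _)
  set F : ℕ → ℝ := fun m => p m * ((1/N) * (1 + 2 * ∑ k ∈ Finset.Icc 1 (N-1), c k m * c k n))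
    with hF
  have hFeq : ∀ m, F m = (1/N) * p m
      + ∑ k ∈ Finset.Icc 1 (N-1), (2/N) * (p m * c k m) * c k n := by
    intro m
    have h1 : F m = (1/N) * p m
        + (p m * (2/N)) * ∑ k ∈ Finset.Icc 1 (N-1), c k m * c k n := by
      rw [hF]; ring
    rw [h1, Finset.mul_sum]
    congr 1
    exact Finset.sum_congr rfl (fun k _ => by ring)
  have h1s : Summable (fun m => (1/N) * p m) := hsp.mul_left _
  have hgk : ∀ k ∈ Finset.Icc 1 (N-1), Summable (fun m => (2/N) * (p m * c k m) * c k n) :=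
    fun k _ => ((hck k).mul_left _).mul_right _
  have h2s : Summable (fun m => ∑ k ∈ Finset.Icc 1 (N-1), (2/N) * (p m * c k m) * c k n) :=
    summable_sum hgk
  have hFsum : Summable F := by
    rw [funext hFeq]; exact h1s.add h2s
  have hphat' : phat n = ∑' m, F m := by
    rw [funext hFeq, h1s.tsum_add h2s, tsum_mul_left, Summable.tsum_finsetSum hgk, hphat n]
    congr 1
    · rw [hA' 0]
      have : (fun m => p m * c 0 m) = p := by
        funext m
        have : c 0 m = 1 := by simp [hc]
        rw [this, mul_one]
      rw [this]
      ring
    · refine Finset.sum_congr rfl (fun k _ => ?_)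
      rw [tsum_mul_right, tsum_mul_left, hA' k]
  have hFnonneg : ∀ m, 0 ≤ F m := by
    intro m
    rw [hF]
    exact mul_nonneg (hp m) (mul_nonneg (by positivity) (key_nonneg' N hN n m))
  have hFn : F n = p n := by
    rw [hF]
    simp only
    rw [key_self' N hN n]
    field_simp
  rw [hphat', ← hFn]
  exact hFsum.le_tsum n (fun j _ => hFnonneg j)
end
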